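/- arXiv:2109.09448 — 3 statements merged into one kernel-verified Lean document; each statement's English description precedes it below -/
import Mathlib

section
/- Let (φ_n) ⊂ C([0,T], ℝ^p) converge uniformly to φ, and let a : ℝ^p → ℝ^{d×d} be continuous with a(y) symmetric positive definite for all y. Then for every ε > 0 there exists n_ε ∈ ℕ such that for all n ≥ n_ε and all t ∈ [0,T], the matrix a(φ_n(t))^{-1} − (1−ε) a(φ(t))^{-1} is positive definite. -/
open Set Filter

open Metric

theorem stmt6 (p d : ℕ) (T : ℝ) (hT : 0 < T)
    (φ : ℕ → ℝ → (Fin p → ℝ)) (φ₀ : ℝ → (Fin p → ℝ))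
    (hφ : ∀ n, ContinuousOn (φ n) (Icc 0 T)) (hφ₀ : ContinuousOn φ₀ (Icc 0 T))
    (hconv : TendstoUniformlyOn φ φ₀ atTop (Icc 0 T))
    (a : (Fin p → ℝ) → Matrix (Fin d) (Fin d) ℝ)
    (ha : Continuous a) (hpd : ∀ y, (a y).PosDef) :
    ∀ ε : ℝ, 0 < ε → ∃ N : ℕ, ∀ n ≥ N, ∀ t ∈ Icc (0:ℝ) T, ∀ v : Fin d → ℝ, v ≠ 0 →
      0 < dotProduct v
        ((((a (φ n t))⁻¹ - (1 - ε) • (a (φ₀ t))⁻¹)).mulVec v) := by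
  intro ε hε
  rcases eq_or_ne d 0 with hd | hd
  · subst hd
    exact ⟨0, fun n _ t _ v hv => (hv (Subsingleton.elim v 0)).elim⟩
  haveI : Nonempty (Fin d) := ⟨⟨0, Nat.pos_of_ne_zero hd⟩⟩
  -- continuity of y ↦ (a y)⁻¹
  have hB : Continuous fun y => (a y)⁻¹ := by
    rw [continuous_iff_continuousAt]
    intro y
    exact (continuousAt_matrix_inv (a y)
      (by rw [Ring.inverse_eq_inv']; exact (continuousAt_inv₀ (hpd y).det_pos.ne'))).comp
      ha.continuousAt
  -- the quadratic form
  set q : (Fin p → ℝ) × (Fin d → ℝ) → ℝ :=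
    fun z => dotProduct z.2 (((a z.1)⁻¹).mulVec z.2) with hq
  have hqpos : ∀ y v, v ≠ 0 → 0 < q (y, v) := by
    intro y v hv
    have := ((hpd y).inv).dotProduct_mulVec_pos hv
    simpa [hq] using this
  have hqc : Continuous q :=
    (continuous_snd).dotProduct ((hB.comp continuous_fst).matrix_mulVec continuous_snd)
  set K₀ : Set (Fin p → ℝ) := φ₀ '' Icc 0 T with hK₀def
  have hK₀ : IsCompact K₀ := isCompact_Icc.image_of_continuousOn hφ₀
  have hK₀ne : K₀.Nonempty := ⟨φ₀ 0, 0, ⟨le_refl 0, hT.le⟩, rfl⟩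
  set S : Set ((Fin p → ℝ) × (Fin d → ℝ)) := K₀ ×ˢ sphere (0 : Fin d → ℝ) 1 with hSdef
  have hS : IsCompact S := hK₀.prod (isCompact_sphere 0 1)
  have hSne : S.Nonempty := hK₀ne.prod (NormedSpace.sphere_nonempty.mpr zero_le_one)
  obtain ⟨z₀, hz₀S, hz₀min⟩ := hS.exists_isMinOn hSne hqc.continuousOn
  set c : ℝ := q z₀ with hc
  have hcpos : 0 < c := hqpos z₀.1 z₀.2 (by
    have : ‖z₀.2‖ = 1 := mem_sphere_zero_iff_norm.mp hz₀S.2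
    intro h; rw [h] at this; simp at this)
  -- uniform continuity on K₁ × sphere
  set K₁ : Set (Fin p → ℝ) := cthickening 1 K₀ with hK₁def
  have hK₁ : IsCompact K₁ := hK₀.cthickening
  set C : Set ((Fin p → ℝ) × (Fin d → ℝ)) := K₁ ×ˢ sphere (0 : Fin d → ℝ) 1 with hCdef
  have hC : IsCompact C := hK₁.prod (isCompact_sphere 0 1)
  have huc : UniformContinuousOn q C := hC.uniformContinuousOn_of_continuous hqc.continuousOn
  obtain ⟨δ, hδpos, hδ⟩ := (Metric.uniformContinuousOn_iff).mp huc (ε * c) (by positivity)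
  obtain ⟨N, hN⟩ := Filter.eventually_atTop.mp
    (Metric.tendstoUniformlyOn_iff.mp hconv (min δ 1) (lt_min hδpos one_pos))
  refine ⟨N, fun n hn t ht v hv => ?_⟩
  have hvn : ‖v‖ ≠ 0 := norm_ne_zero_iff.mpr hv
  set u : Fin d → ℝ := ‖v‖⁻¹ • v with hu
  have hun : ‖u‖ = 1 := by rw [hu, norm_smul, norm_inv, norm_norm, inv_mul_cancel₀ hvn]
  have hune : u ≠ 0 := by intro h; rw [h] at hun; simp at hun
  have husph : u ∈ sphere (0 : Fin d → ℝ) 1 := mem_sphere_zero_iff_norm.mpr hun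
  have hyK₀ : φ₀ t ∈ K₀ := ⟨t, ht, rfl⟩
  have hdist := hN n hn t ht
  have hd1 : dist (φ n t) (φ₀ t) < δ := by
    rw [dist_comm]; exact hdist.trans_le (min_le_left _ _)
  have hd2 : dist (φ n t) (φ₀ t) ≤ 1 := by
    rw [dist_comm]; exact (hdist.trans_le (min_le_right _ _)).le
  have hxC : (φ n t, u) ∈ C := ⟨mem_cthickening_of_dist_le _ _ 1 K₀ hyK₀ hd2, husph⟩
  have hyC : (φ₀ t, u) ∈ C := ⟨self_subset_cthickening _ hyK₀, husph⟩
  have hdq : dist (q (φ n t, u)) (q (φ₀ t, u)) < ε * c := by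
    refine hδ _ hxC _ hyC ?_
    rw [Prod.dist_eq]
    simp only [dist_self]
    exact max_lt hd1 hδpos
  have hcq : c ≤ q (φ₀ t, u) := hz₀min (show (φ₀ t, u) ∈ S from ⟨hyK₀, husph⟩)
  have hkey : (1 - ε) * q (φ₀ t, u) < q (φ n t, u) := by
    rw [Real.dist_eq, abs_sub_lt_iff] at hdq
    nlinarith [hdq.2, mul_le_mul_of_nonneg_left hcq hε.le]
  have hvu : v = ‖v‖ • u := by rw [hu, smul_smul, mul_inv_cancel₀ hvn, one_smul]
  have key2 : dotProduct v ((((a (φ n t))⁻¹ - (1 - ε) • (a (φ₀ t))⁻¹)).mulVec v)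
      = ‖v‖ ^ 2 * (q (φ n t, u) - (1 - ε) * q (φ₀ t, u)) := by
    conv_lhs => rw [hvu]
    simp only [hq, Matrix.sub_mulVec, Matrix.mulVec_smul, Matrix.smul_mulVec,
      dotProduct_sub, dotProduct_smul, smul_dotProduct, smul_eq_mul]
    ring
  rw [key2]
  have hv2 : 0 < ‖v‖ ^ 2 := by positivity
  nlinarith [hkey]
end

section
/- Let μ : ℝ^p → ℝ^d be continuous and a : ℝ^p → ℝ^{d×d} continuous with a(y) symmetric positive definite for all y. Define J(x|φ) = (1/2)∫₀ᵀ (ẋ(t) − μ(φ(t)))ᵀ a(φ(t))^{-1} (ẋ(t) − μ(φ(t))) dt for x ∈ H₀^{1,d}[0,T] and J(x|φ) = +∞ otherwise. Then J(·|·) is jointly lower semicontinuous on C₀([0,T],ℝ^p) × C₀([0,T],ℝ^d) with the uniform topologies: if φ_n → φ uniformly and x_n → x uniformly, then liminf_{n→∞} J(x_n|φ_n) ≥ J(x|φ). -/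
open MeasureTheory Filter Set
open scoped ENNReal

attribute [local instance] Matrix.normedAddCommGroup

lemma aux1 {d : ℕ} (v : Fin d → ℝ) :
    (∑ i, |v i|) ^ 2 ≤ d * dotProduct v v := by
  have h := sq_sum_le_card_mul_sum_sq (s := (Finset.univ : Finset (Fin d))) (f := fun i => |v i|)
  simpa [dotProduct, sq_abs, Finset.card_univ, sq, Finset.mul_sum, mul_comm] using h

lemma aux2 {d : ℕ} (M : Matrix (Fin d) (Fin d) ℝ) (v w : Fin d → ℝ) :
    |dotProduct v (M.mulVec w)| ≤ ‖M‖ * (∑ i, |v i|) * (∑ j, |w j|) := by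
  have hM : ∀ i j, |M i j| ≤ ‖M‖ := fun i j => M.norm_entry_le_entrywise_sup_norm
  calc |dotProduct v (M.mulVec w)|
      ≤ ∑ i, |v i * ∑ j, M i j * w j| := Finset.abs_sum_le_sum_abs _ _
    _ ≤ ∑ i, |v i| * ∑ j, ‖M‖ * |w j| := by
        refine Finset.sum_le_sum fun i _ => ?_
        rw [abs_mul]
        refine mul_le_mul_of_nonneg_left ?_ (abs_nonneg _)
        calc |∑ j, M i j * w j| ≤ ∑ j, |M i j * w j| := Finset.abs_sum_le_sum_abs _ _
          _ ≤ ∑ j, ‖M‖ * |w j| := by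
              refine Finset.sum_le_sum fun j _ => ?_
              rw [abs_mul]
              exact mul_le_mul_of_nonneg_right (hM i j) (abs_nonneg _)
    _ = ‖M‖ * (∑ i, |v i|) * (∑ j, |w j|) := by
        rw [← Finset.mul_sum, ← Finset.sum_mul]; ring

lemma auxe {d : ℕ} (v : Fin d → ℝ) : 0 ≤ dotProduct v v :=
  Finset.sum_nonneg fun i _ => mul_self_nonneg _

lemma aux3 {d : ℕ} (M : Matrix (Fin d) (Fin d) ℝ) (v : Fin d → ℝ) :
    |dotProduct v (M.mulVec v)| ≤ ‖M‖ * d * dotProduct v v := by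
  have h2 := aux2 M v v
  have h1 := aux1 v
  have hs : (0:ℝ) ≤ ∑ i, |v i| := Finset.sum_nonneg fun i _ => abs_nonneg _
  have hM : (0:ℝ) ≤ ‖M‖ := norm_nonneg _
  nlinarith [sq_nonneg (∑ i, |v i|)]

lemma key {d : ℕ} (lam N η θ : ℝ) (hlam : 0 < lam) (hN : 0 ≤ N) (hθ : 0 < θ) (hη : 0 ≤ η)
    (Q Q' : Matrix (Fin d) (Fin d) ℝ) (hQN : ‖Q‖ ≤ N)
    (hQlam : ∀ v, lam * dotProduct v v ≤ dotProduct v (Q.mulVec v))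
    (hQ' : ‖Q' - Q‖ * d ≤ η) (w s : Fin d → ℝ) :
    dotProduct w (Q.mulVec w)
      - ((2*η + N*d*θ)/lam) * dotProduct w (Q.mulVec w)
      - (2*η + N*d/θ + N*d) * dotProduct s s
    ≤ dotProduct (w+s) (Q'.mulVec (w+s)) := by
  set x := w + s with hx
  have ew := auxe w
  have es := auxe s
  have ex := auxe x
  -- e x ≤ 2 e w + 2 e s
  have hex : dotProduct x x ≤ 2 * dotProduct w w + 2 * dotProduct s s := by
    simp only [hx, dotProduct, Pi.add_apply, Finset.mul_sum, ← Finset.sum_add_distrib]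
    refine Finset.sum_le_sum fun i _ => by nlinarith [sq_nonneg (w i - s i)]
  -- perturbation
  have hpert : dotProduct x (Q.mulVec x) - η * dotProduct x x
      ≤ dotProduct x (Q'.mulVec x) := by
    have h := aux3 (Q' - Q) x
    have hexp : dotProduct x ((Q' - Q).mulVec x)
        = dotProduct x (Q'.mulVec x) - dotProduct x (Q.mulVec x) := by
      rw [Matrix.sub_mulVec, dotProduct_sub]
    have hb : |dotProduct x ((Q' - Q).mulVec x)| ≤ η * dotProduct x x := by
      refine h.trans ?_
      have : ‖Q' - Q‖ * ↑d * dotProduct x x ≤ η * dotProduct x x :=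
        mul_le_mul_of_nonneg_right hQ' ex
      exact this
    have := abs_le.mp hb
    linarith [this.1, hexp]
  -- expansion of q(w+s)
  have hexpand : dotProduct x (Q.mulVec x)
      = dotProduct w (Q.mulVec w) + dotProduct w (Q.mulVec s)
        + dotProduct s (Q.mulVec w) + dotProduct s (Q.mulVec s) := by
    rw [hx, Matrix.mulVec_add, add_dotProduct, dotProduct_add,
      dotProduct_add]
    ring
  -- cross terms
  have Sw : (0:ℝ) ≤ ∑ i, |w i| := Finset.sum_nonneg fun i _ => abs_nonneg _
  have Ss : (0:ℝ) ≤ ∑ i, |s i| := Finset.sum_nonneg fun i _ => abs_nonneg _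
  have hws := (abs_le.mp ((aux2 Q w s).trans
    (mul_le_mul_of_nonneg_right (mul_le_mul_of_nonneg_right hQN Sw) Ss))).1
  have hsw := (abs_le.mp ((aux2 Q s w).trans
    (mul_le_mul_of_nonneg_right (mul_le_mul_of_nonneg_right hQN Ss) Sw))).1
  have hss := (abs_le.mp ((aux3 Q s).trans
    (mul_le_mul_of_nonneg_right (mul_le_mul_of_nonneg_right hQN (Nat.cast_nonneg d)) (auxe s)))).1
  -- AM-GM : 2 N Σw Σs ≤ N θ d e w + N d e s / θ
  have hamgm : 2 * (N * (∑ i, |w i|) * (∑ j, |s j|))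
      ≤ N*θ*d*dotProduct w w + N*d/θ*dotProduct s s := by
    have h1 := aux1 w
    have h2 := aux1 s
    have key0 : 2 * ((∑ i, |w i|) * (∑ j, |s j|)) ≤ θ*((∑ i, |w i|))^2 + ((∑ j, |s j|))^2/θ := by
      have hd : ((∑ j, |s j|))^2/θ * θ = ((∑ j, |s j|))^2 := div_mul_cancel₀ _ hθ.ne'
      nlinarith [sq_nonneg (θ * (∑ i, |w i|) - (∑ j, |s j|)), hθ, hd]
    have kN := mul_le_mul_of_nonneg_left key0 hN
    have t1 : N * θ * ((∑ i, |w i|))^2 ≤ N * θ * (↑d * dotProduct w w) :=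
      mul_le_mul_of_nonneg_left h1 (by positivity)
    have t2 : N / θ * ((∑ j, |s j|))^2 ≤ N / θ * (↑d * dotProduct s s) :=
      mul_le_mul_of_nonneg_left h2 (by positivity)
    have hθ' := hθ.ne'
    have e1 : N * (θ*((∑ i, |w i|))^2 + ((∑ j, |s j|))^2/θ)
        = N * θ * ((∑ i, |w i|))^2 + N / θ * ((∑ j, |s j|))^2 := by field_simp
    have e2 : N * θ * (↑d * dotProduct w w) = N*θ*↑d*dotProduct w w := by ring
    have e3 : N / θ * (↑d * dotProduct s s) = N*↑d/θ*dotProduct s s := by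
      field_simp
    linarith [kN, t1, t2]
  -- e w ≤ q w / lam
  have hqw := hQlam w
  have hqwpos : 0 ≤ dotProduct w (Q.mulVec w) := le_trans (by nlinarith) hqw
  have hcoef : (2*η + N*d*θ)/lam * dotProduct w (Q.mulVec w)
      ≥ (2*η + N*d*θ) * dotProduct w w := by
    rw [div_mul_eq_mul_div, ge_iff_le, le_div_iff₀ hlam]
    have hc : (0:ℝ) ≤ 2*η + N*d*θ := by positivity
    calc (2*η + N*d*θ) * dotProduct w w * lam
        = (2*η + N*d*θ) * (lam * dotProduct w w) := by ring
      _ ≤ (2*η + N*d*θ) * dotProduct w (Q.mulVec w) := by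
          exact mul_le_mul_of_nonneg_left hqw hc
  have hexq := mul_le_mul_of_nonneg_left hex hη
  linarith [hpert, hex, hws, hsw, hss, hamgm, hcoef, hexq, es, ew]

lemma Qcont {p d : ℕ} (a : (Fin p → ℝ) → Matrix (Fin d) (Fin d) ℝ)
    (ha : Continuous a) (hpd : ∀ y, (a y).PosDef) :
    Continuous fun y => (a y)⁻¹ := by
  rw [continuous_iff_continuousAt]
  intro y
  have hdet : (a y).det ≠ 0 := (hpd y).det_pos.ne'
  have h : ContinuousAt Ring.inverse (a y).det := by
    rw [Ring.inverse_eq_inv']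
    exact continuousAt_inv₀ hdet
  exact (continuousAt_matrix_inv (a y) h).comp ha.continuousAt

lemma lamBound {p d : ℕ} (a : (Fin p → ℝ) → Matrix (Fin d) (Fin d) ℝ)
    (ha : Continuous a) (hpd : ∀ y, (a y).PosDef)
    (K : Set (Fin p → ℝ)) (hK : IsCompact K) (hKne : K.Nonempty) :
    ∃ lam > 0, ∀ y ∈ K, ∀ v : Fin d → ℝ,
      lam * dotProduct v v ≤ dotProduct v ((a y)⁻¹.mulVec v) := by
  rcases Nat.eq_zero_or_pos d with hd | hd
  · refine ⟨1, one_pos, fun y hy v => ?_⟩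
    subst hd
    simp [dotProduct]
  · set S : Set (Fin d → ℝ) := {v | dotProduct v v = 1} with hS
    have hconte : Continuous fun v : Fin d → ℝ => dotProduct v v := by
      exact Continuous.dotProduct continuous_id continuous_id
    have hSclosed : IsClosed S := isClosed_eq hconte continuous_const
    have hSsub : S ⊆ Metric.closedBall 0 1 := by
      intro v hv
      rw [Metric.mem_closedBall, dist_zero_right]
      rw [pi_norm_le_iff_of_nonneg zero_le_one]
      intro i
      rw [Real.norm_eq_abs, abs_le]
      have h1 : v i * v i ≤ 1 := by
        have he : v i * v i + ∑ j ∈ Finset.univ.erase i, v j * v j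
            = ∑ j, v j * v j := Finset.add_sum_erase Finset.univ (fun j => v j * v j) (Finset.mem_univ i)
        have hv1 : (∑ j, v j * v j) = 1 := hv
        nlinarith [Finset.sum_nonneg (fun j (_ : j ∈ Finset.univ.erase i) => mul_self_nonneg (v j))]
      constructor <;> nlinarith
    have hScompact : IsCompact S :=
      (isCompact_closedBall 0 1).of_isClosed_subset hSclosed hSsub
    have hSne : S.Nonempty := by
      refine ⟨Pi.single ⟨0, hd⟩ 1, ?_⟩
      simp [hS, dotProduct, Pi.single_apply]
    have hprod : IsCompact (K ×ˢ S) := hK.prod hScompact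
    have hprodne : (K ×ˢ S).Nonempty := hKne.prod hSne
    have hG : Continuous fun z : (Fin p → ℝ) × (Fin d → ℝ) =>
        dotProduct z.2 ((a z.1)⁻¹.mulVec z.2) := by
      have h1 : Continuous fun z : (Fin p → ℝ) × (Fin d → ℝ) => (a z.1)⁻¹ :=
        (Qcont a ha hpd).comp continuous_fst
      exact continuous_snd.dotProduct (h1.matrix_mulVec continuous_snd)
    obtain ⟨z₀, hz₀, hmin⟩ := hprod.exists_isMinOn hprodne hG.continuousOn
    set lam := dotProduct z₀.2 ((a z₀.1)⁻¹.mulVec z₀.2) with hlamdef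
    have hz₀2 : z₀.2 ≠ 0 := by
      intro h0
      have := hz₀.2
      rw [hS] at this
      simp only [mem_setOf_eq, h0, zero_dotProduct] at this
      exact zero_ne_one this
    have hlampos : 0 < lam := by
      have := ((hpd z₀.1).inv).dotProduct_mulVec_pos (x := z₀.2) hz₀2
      simp only [star_trivial] at this; exact this
    refine ⟨lam, hlampos, fun y hy v => ?_⟩
    rcases eq_or_ne (dotProduct v v) 0 with hv0 | hv0
    · have hv : v = 0 := by
        funext i
        have := (Finset.sum_eq_zero_iff_of_nonneg
          (fun j (_ : j ∈ Finset.univ) => mul_self_nonneg (v j))).mp hv0 i (Finset.mem_univ i)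
        simp only [Pi.zero_apply]
        nlinarith
      simp [hv, hv0]
    · have hc : 0 < dotProduct v v := lt_of_le_of_ne (auxe v) (Ne.symm hv0)
      set r := Real.sqrt (dotProduct v v) with hr
      have hrpos : 0 < r := Real.sqrt_pos.mpr hc
      set u := r⁻¹ • v with hu
      have hru : v = r • u := by
        rw [hu, smul_smul, mul_inv_cancel₀ hrpos.ne', one_smul]
      have huS : u ∈ S := by
        rw [hS, mem_setOf_eq, hu, smul_dotProduct, dotProduct_smul]
        simp only [smul_eq_mul]
        rw [← mul_assoc]
        have : r * r = dotProduct v v := Real.mul_self_sqrt (auxe v)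
        field_simp
        nlinarith [this]
      have hq : dotProduct v ((a y)⁻¹.mulVec v)
          = (r * r) * dotProduct u ((a y)⁻¹.mulVec u) := by
        rw [hru, smul_dotProduct, Matrix.mulVec_smul, dotProduct_smul]
        simp only [smul_eq_mul]; ring
      have hrr : r * r = dotProduct v v := Real.mul_self_sqrt (auxe v)
      have hge : lam ≤ dotProduct u ((a y)⁻¹.mulVec u) := hmin (Set.mk_mem_prod hy huS)
      calc lam * dotProduct v v = (r*r) * lam := by rw [hrr]; ring
        _ ≤ (r*r) * dotProduct u ((a y)⁻¹.mulVec u) := by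
            exact mul_le_mul_of_nonneg_left hge (by positivity)
        _ = dotProduct v ((a y)⁻¹.mulVec v) := hq.symm

set_option maxHeartbeats 1000000 in
lemma unifEst {p d : ℕ} (μ : (Fin p → ℝ) → (Fin d → ℝ)) (hμ : Continuous μ)
    (a : (Fin p → ℝ) → Matrix (Fin d) (Fin d) ℝ)
    (ha : Continuous a) (hpd : ∀ y, (a y).PosDef)
    (K : Set (Fin p → ℝ)) (hK : IsCompact K) (hKne : K.Nonempty)
    {ε : ℝ} (hε : 0 < ε) :
    ∃ δ > 0, ∀ y ∈ K, ∀ y' ∈ K, dist y' y < δ → ∀ v : Fin d → ℝ,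
      (1-ε) * (dotProduct (v - μ y) ((a y)⁻¹.mulVec (v - μ y))) - ε
        ≤ dotProduct (v - μ y') ((a y')⁻¹.mulVec (v - μ y')) := by
  obtain ⟨lam, hlam, hlamB⟩ := lamBound a ha hpd K hK hKne
  obtain ⟨y₀, hy₀, hNmax⟩ := hK.exists_isMaxOn hKne
    (((Qcont a ha hpd).norm).continuousOn)
  obtain ⟨N, hN, hNB⟩ : ∃ N, 0 ≤ N ∧ ∀ y ∈ K, ‖(a y)⁻¹‖ ≤ N :=
    ⟨max ‖(a y₀)⁻¹‖ 0, le_max_right _ _, fun y hy => (hNmax hy).trans (le_max_left _ _)⟩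
  -- constants
  obtain ⟨θ, hθ, η, hη, hc1'⟩ : ∃ θ > 0, ∃ η > 0, 2*η + N*(d:ℝ)*θ ≤ ε * lam := by
    refine ⟨ε * lam / (2 * (N * d + 1)), by positivity, ε * lam / 4, by positivity, ?_⟩
    have h1 : (0:ℝ) < 2*(N*d + 1) := by positivity
    have e1 : ε * lam / (2*(N*d+1)) * (2*(N*d+1)) = ε * lam := div_mul_cancel₀ _ h1.ne'
    have hA : 0 ≤ ε * lam / (2*(N*d+1)) := by positivity
    have hB : 0 < ε * lam := by positivity
    nlinarith [e1, hA, hN, Nat.cast_nonneg (α := ℝ) d]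
  obtain ⟨C, hC, hCdef⟩ : ∃ C, 0 ≤ C ∧ C = 2*η + N*(d:ℝ)/θ + N*(d:ℝ) := by
    refine ⟨2*η + N*(d:ℝ)/θ + N*(d:ℝ), ?_, rfl⟩
    have := div_nonneg (by positivity : (0:ℝ) ≤ N*(d:ℝ)) hθ.le
    have := Nat.cast_nonneg (α := ℝ) d
    nlinarith [hη.le, hN]
  -- uniform continuity of the inverse matrix field and of μ on K
  have hUC := Metric.uniformContinuousOn_iff.mp
    (hK.uniformContinuousOn_of_continuous (Qcont a ha hpd).continuousOn)
  obtain ⟨δ₁, hδ₁, hUC1⟩ := hUC (η / (d + 1)) (by positivity)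
  have hUCμ := Metric.uniformContinuousOn_iff.mp
    (hK.uniformContinuousOn_of_continuous hμ.continuousOn)
  obtain ⟨δ₂, hδ₂, hUC2⟩ := hUCμ (min 1 (ε / ((C+1)*d + 1))) (by positivity)
  refine ⟨min δ₁ δ₂, lt_min hδ₁ hδ₂, fun y hy y' hy' hdist v => ?_⟩
  set Q := (a y)⁻¹ with hQdef
  set Q' := (a y')⁻¹ with hQ'def
  set w := v - μ y with hwdef
  set s := μ y - μ y' with hsdef
  have hws : v - μ y' = w + s := by rw [hwdef, hsdef]; abel
  -- norm bound for Q' - Q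
  have hQη : ‖Q' - Q‖ * d ≤ η := by
    have h := hUC1 y' hy' y hy (lt_of_lt_of_le hdist (min_le_left _ _))
    rw [dist_eq_norm] at h
    have hnn : (0:ℝ) ≤ ‖Q' - Q‖ := norm_nonneg _
    have h2 : (0:ℝ) < (d:ℝ) + 1 := by positivity
    have e1 : η / ((d:ℝ)+1) * ((d:ℝ)+1) = η := div_mul_cancel₀ _ h2.ne'
    nlinarith [mul_le_mul_of_nonneg_right h.le (Nat.cast_nonneg (α := ℝ) d), e1,
      div_nonneg hη.le h2.le, Nat.cast_nonneg (α := ℝ) d]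
  -- bound on s
  have hsb : dotProduct s s ≤ ε / (C + 1) := by
    have h := hUC2 y hy y' hy' (by
      rw [dist_comm]; exact lt_of_lt_of_le hdist (min_le_right _ _))
    have hd1 : dist (μ y) (μ y') < 1 := lt_of_lt_of_le h (min_le_left _ _)
    have hd2 : dist (μ y) (μ y') < ε / ((C+1)*d + 1) := lt_of_lt_of_le h (min_le_right _ _)
    have hdn : 0 ≤ dist (μ y) (μ y') := dist_nonneg
    have hcoord : ∀ i, |s i| ≤ dist (μ y) (μ y') := by
      intro i
      have := dist_le_pi_dist (μ y) (μ y') i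
      rw [Real.dist_eq] at this
      simpa [hsdef] using this
    have hsum : dotProduct s s ≤ d * (dist (μ y) (μ y'))^2 := by
      rw [dotProduct]
      calc ∑ i, s i * s i ≤ ∑ _i : Fin d, (dist (μ y) (μ y'))^2 := by
            refine Finset.sum_le_sum fun i _ => ?_
            have h := hcoord i
            nlinarith [abs_nonneg (s i), sq_abs (s i), abs_le.mp h]
        _ = d * (dist (μ y) (μ y'))^2 := by
            rw [Finset.sum_const, Finset.card_univ, Fintype.card_fin, nsmul_eq_mul]
    have hsq : (dist (μ y) (μ y'))^2 ≤ dist (μ y) (μ y') := by nlinarith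
    calc dotProduct s s ≤ d * (dist (μ y) (μ y'))^2 := hsum
      _ ≤ d * dist (μ y) (μ y') := by
          exact mul_le_mul_of_nonneg_left hsq (Nat.cast_nonneg d)
      _ ≤ d * (ε / ((C+1)*d + 1)) := mul_le_mul_of_nonneg_left hd2.le (Nat.cast_nonneg d)
      _ ≤ ε / (C + 1) := by
          have h1 : (0:ℝ) < (C+1)*d + 1 := by positivity
          have h2 : (0:ℝ) < C + 1 := by positivity
          have e1 : ε / ((C+1)*d+1) * ((C+1)*d+1) = ε := div_mul_cancel₀ _ h1.ne'
          have e2 : ε / (C+1) * (C+1) = ε := div_mul_cancel₀ _ h2.ne'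
          have hA : 0 ≤ ε / ((C+1)*d+1) := by positivity
          nlinarith [e1, e2, hA, h2, Nat.cast_nonneg (α := ℝ) d]
  have hkey := key lam N η θ hlam hN hθ hη.le Q Q' (hNB y hy)
    (fun v => hlamB y hy v) hQη w s
  rw [hws]
  refine le_trans ?_ hkey
  have hqw : 0 ≤ dotProduct w (Q.mulVec w) := by
    have := (hpd y).inv.posSemidef.dotProduct_mulVec_nonneg w
    simpa using this
  have hc1 : (2*η + N*↑d*θ)/lam ≤ ε := by
    rw [div_le_iff₀ hlam]
    exact hc1'
  have hc2 : C * dotProduct s s ≤ ε := by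
    calc C * dotProduct s s ≤ C * (ε / (C+1)) :=
          mul_le_mul_of_nonneg_left hsb hC
      _ ≤ ε := by
          have h2 : (0:ℝ) < C + 1 := by positivity
          have e2 : ε / (C+1) * (C+1) = ε := div_mul_cancel₀ _ h2.ne'
          have hA : 0 ≤ ε / (C+1) := by positivity
          nlinarith [e2, hA, hC]
  have hmono : ((2*η + N*↑d*θ)/lam) * dotProduct w (Q.mulVec w)
      ≤ ε * dotProduct w (Q.mulVec w) := mul_le_mul_of_nonneg_right hc1 hqw
  rw [hCdef] at hc2
  linarith

/-- The conditional rate functional `J(x|φ)`: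
`J(x|φ) = (1/2)∫₀ᵀ (ẋ(t) − μ(φ(t)))ᵀ a(φ(t))⁻¹ (ẋ(t) − μ(φ(t))) dt` when `x` is
absolutely continuous with square-integrable derivative `u = ẋ` and `x 0 = 0`
(encoded through the integral representation `x t = ∫₀ᵗ u`), and `+∞` otherwise
(`sInf ∅ = ⊤`). -/
noncomputable def Jrate (p d : ℕ) (T : ℝ) (hT : (0:ℝ) ≤ T)
    (μ : (Fin p → ℝ) → (Fin d → ℝ)) (a : (Fin p → ℝ) → Matrix (Fin d) (Fin d) ℝ)
    (φ : C(Set.Icc (0:ℝ) T, Fin p → ℝ)) (x : C(Set.Icc (0:ℝ) T, Fin d → ℝ)) : ℝ≥0∞ :=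
  sInf {r : ℝ≥0∞ | ∃ u : ℝ → Fin d → ℝ,
    (∀ i, IntervalIntegrable (fun s => u s i) volume 0 T) ∧
    IntervalIntegrable (fun t => dotProduct
        (u t - μ (φ (Set.projIcc 0 T hT t)))
        (((a (φ (Set.projIcc 0 T hT t)))⁻¹).mulVec
          (u t - μ (φ (Set.projIcc 0 T hT t))))) volume 0 T ∧
    (∀ t : Set.Icc (0:ℝ) T, ∀ i, x t i = ∫ s in (0:ℝ)..(t:ℝ), u s i) ∧
    r = ENNReal.ofReal ((1/2) * ∫ t in (0:ℝ)..T, dotProduct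
        (u t - μ (φ (Set.projIcc 0 T hT t)))
        (((a (φ (Set.projIcc 0 T hT t)))⁻¹).mulVec
          (u t - μ (φ (Set.projIcc 0 T hT t)))))}

set_option maxHeartbeats 1000000 in
lemma core {p d : ℕ} {T : ℝ} (hT : 0 < T)
    (μ : (Fin p → ℝ) → (Fin d → ℝ)) (hμ : Continuous μ)
    (a : (Fin p → ℝ) → Matrix (Fin d) (Fin d) ℝ)
    (ha : Continuous a) (hpd : ∀ y, (a y).PosDef)
    (ψ ψ' : C(Set.Icc (0:ℝ) T, Fin p → ℝ)) (x' : C(Set.Icc (0:ℝ) T, Fin d → ℝ))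
    {ε : ℝ} (hε0 : 0 < ε) (hε1 : ε < 1)
    (hpt : ∀ t : ℝ, ∀ v : Fin d → ℝ,
      (1-ε) * dotProduct (v - μ (ψ (Set.projIcc 0 T hT.le t)))
          (((a (ψ (Set.projIcc 0 T hT.le t)))⁻¹).mulVec (v - μ (ψ (Set.projIcc 0 T hT.le t)))) - ε
        ≤ dotProduct (v - μ (ψ' (Set.projIcc 0 T hT.le t)))
          (((a (ψ' (Set.projIcc 0 T hT.le t)))⁻¹).mulVec (v - μ (ψ' (Set.projIcc 0 T hT.le t))))) :
    ENNReal.ofReal (1-ε) * Jrate p d T hT.le μ a ψ x' ≤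
      Jrate p d T hT.le μ a ψ' x' + ENNReal.ofReal (ε*T/2) := by
  have h1ε : (0:ℝ) < 1 - ε := by linarith
  have hk : ENNReal.ofReal (1-ε) * Jrate p d T hT.le μ a ψ x' - ENNReal.ofReal (ε*T/2)
      ≤ Jrate p d T hT.le μ a ψ' x' := by
    conv_rhs => unfold Jrate
    refine le_sInf ?_
    rintro r ⟨u, huI, huQ, hurep, hrval⟩
    rw [tsub_le_iff_right]
    set g : ℝ → ℝ := fun t => dotProduct (u t - μ (ψ (Set.projIcc 0 T hT.le t)))
      (((a (ψ (Set.projIcc 0 T hT.le t)))⁻¹).mulVec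
        (u t - μ (ψ (Set.projIcc 0 T hT.le t)))) with hgdef
    set g' : ℝ → ℝ := fun t => dotProduct (u t - μ (ψ' (Set.projIcc 0 T hT.le t)))
      (((a (ψ' (Set.projIcc 0 T hT.le t)))⁻¹).mulVec
        (u t - μ (ψ' (Set.projIcc 0 T hT.le t)))) with hg'def
    have hg0 : ∀ t, 0 ≤ g t := fun t => by
      simpa only [star_trivial] using
        (hpd _).inv.posSemidef.dotProduct_mulVec_nonneg (u t - μ (ψ (Set.projIcc 0 T hT.le t)))
    have hg'0 : ∀ t, 0 ≤ g' t := fun t => by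
      simpa only [star_trivial] using
        (hpd _).inv.posSemidef.dotProduct_mulVec_nonneg (u t - μ (ψ' (Set.projIcc 0 T hT.le t)))
    have hptg : ∀ t, (1-ε) * g t - ε ≤ g' t := fun t => hpt t (u t)
    -- measurability of g
    have hmeasu : AEMeasurable u (volume.restrict (Set.Ioc 0 T)) := by
      have h : ∀ i, AEMeasurable (fun s => u s i) (volume.restrict (Set.Ioc 0 T)) := fun i =>
        ((intervalIntegrable_iff_integrableOn_Ioc_of_le hT.le).mp (huI i)).aemeasurable
      refine ⟨fun s i => (h i).mk _ s, measurable_pi_iff.mpr fun i => (h i).measurable_mk, ?_⟩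
      filter_upwards [ae_all_iff.2 fun i => (h i).ae_eq_mk] with s hs
      funext i
      exact hs i
    have hψc : Continuous fun t : ℝ => ψ (Set.projIcc 0 T hT.le t) :=
      ψ.continuous.comp continuous_projIcc
    have hG : Continuous fun q : ℝ × (Fin d → ℝ) =>
        dotProduct (q.2 - μ (ψ (Set.projIcc 0 T hT.le q.1)))
          (((a (ψ (Set.projIcc 0 T hT.le q.1)))⁻¹).mulVec
            (q.2 - μ (ψ (Set.projIcc 0 T hT.le q.1)))) := by
      have hμc : Continuous fun q : ℝ × (Fin d → ℝ) => q.2 - μ (ψ (Set.projIcc 0 T hT.le q.1)) :=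
        continuous_snd.sub ((hμ.comp hψc).comp continuous_fst)
      have hQc : Continuous fun q : ℝ × (Fin d → ℝ) => (a (ψ (Set.projIcc 0 T hT.le q.1)))⁻¹ :=
        (Qcont a ha hpd).comp ((hψc.comp continuous_fst))
      exact hμc.dotProduct (hQc.matrix_mulVec hμc)
    have hgmeas : AEStronglyMeasurable g (volume.restrict (Set.Ioc 0 T)) :=
      (hG.measurable.comp_aemeasurable (aemeasurable_id.prodMk hmeasu)).aestronglyMeasurable
    -- integrability of g
    have hInt' : IntegrableOn g' (Set.Ioc 0 T) volume :=
      (intervalIntegrable_iff_integrableOn_Ioc_of_le hT.le).mp huQ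
    have hbound : IntegrableOn (fun t => (g' t + ε) / (1-ε)) (Set.Ioc 0 T) volume :=
      (hInt'.add (integrableOn_const measure_Ioc_lt_top.ne)).div_const (1-ε)
    have hgInt : IntegrableOn g (Set.Ioc 0 T) volume := by
      refine Integrable.mono' hbound hgmeas (Filter.Eventually.of_forall fun t => ?_)
      rw [Real.norm_eq_abs, abs_of_nonneg (hg0 t), le_div_iff₀ h1ε]
      have := hptg t
      linarith
    have hgII : IntervalIntegrable g volume 0 T :=
      (intervalIntegrable_iff_integrableOn_Ioc_of_le hT.le).mpr hgInt
    -- membership for ψ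
    have hle : Jrate p d T hT.le μ a ψ x'
        ≤ ENNReal.ofReal ((1/2) * ∫ t in (0:ℝ)..T, g t) := by
      conv_lhs => unfold Jrate
      exact sInf_le ⟨u, huI, hgII, hurep, rfl⟩
    -- integral comparison
    have hIeq : ∫ t in (0:ℝ)..T, ((1-ε) * g t - ε) ≤ ∫ t in (0:ℝ)..T, g' t := by
      refine intervalIntegral.integral_mono_on hT.le
        ((hgII.const_mul (1-ε)).sub intervalIntegrable_const) huQ fun t ht => hptg t
    have hIlin : ∫ t in (0:ℝ)..T, ((1-ε) * g t - ε)
        = (1-ε) * (∫ t in (0:ℝ)..T, g t) - ε*T := by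
      rw [intervalIntegral.integral_sub (hgII.const_mul (1-ε)) intervalIntegrable_const,
        intervalIntegral.integral_const_mul, intervalIntegral.integral_const, smul_eq_mul]
      ring
    have hI0 : 0 ≤ ∫ t in (0:ℝ)..T, g t :=
      intervalIntegral.integral_nonneg hT.le fun t _ => hg0 t
    have hI'0 : 0 ≤ ∫ t in (0:ℝ)..T, g' t :=
      intervalIntegral.integral_nonneg hT.le fun t _ => hg'0 t
    calc ENNReal.ofReal (1-ε) * Jrate p d T hT.le μ a ψ x'
        ≤ ENNReal.ofReal (1-ε) * ENNReal.ofReal ((1/2) * ∫ t in (0:ℝ)..T, g t) :=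
          mul_le_mul_right hle _
      _ = ENNReal.ofReal ((1-ε) * ((1/2) * ∫ t in (0:ℝ)..T, g t)) :=
          (ENNReal.ofReal_mul h1ε.le).symm
      _ ≤ ENNReal.ofReal ((1/2) * (∫ t in (0:ℝ)..T, g' t) + ε*T/2) := by
          refine ENNReal.ofReal_le_ofReal ?_
          rw [hIlin] at hIeq
          linarith
      _ = ENNReal.ofReal ((1/2) * ∫ t in (0:ℝ)..T, g' t) + ENNReal.ofReal (ε*T/2) :=
          ENNReal.ofReal_add (by positivity) (by positivity)
      _ = r + ENNReal.ofReal (ε*T/2) := by rw [hrval]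
  calc ENNReal.ofReal (1-ε) * Jrate p d T hT.le μ a ψ x'
      ≤ (ENNReal.ofReal (1-ε) * Jrate p d T hT.le μ a ψ x' - ENNReal.ofReal (ε*T/2))
          + ENNReal.ofReal (ε*T/2) := le_tsub_add
    _ ≤ Jrate p d T hT.le μ a ψ' x' + ENNReal.ofReal (ε*T/2) := add_le_add_left hk _

set_option maxHeartbeats 1000000 in
theorem stmt16 (p d : ℕ) (T : ℝ) (hT : 0 < T)
    (μ : (Fin p → ℝ) → (Fin d → ℝ)) (hμ : Continuous μ)
    (a : (Fin p → ℝ) → Matrix (Fin d) (Fin d) ℝ)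
    (ha : Continuous a) (hpd : ∀ y, (a y).PosDef)
    -- for each fixed φ, J(·|φ) is lower semicontinuous
    (hlsc : ∀ φ : C(Set.Icc (0:ℝ) T, Fin p → ℝ),
      LowerSemicontinuous (Jrate p d T hT.le μ a φ))
    (φn : ℕ → C(Set.Icc (0:ℝ) T, Fin p → ℝ)) (φ : C(Set.Icc (0:ℝ) T, Fin p → ℝ))
    (xn : ℕ → C(Set.Icc (0:ℝ) T, Fin d → ℝ)) (x : C(Set.Icc (0:ℝ) T, Fin d → ℝ))
    (hφ : Tendsto φn atTop (nhds φ)) (hx : Tendsto xn atTop (nhds x)) :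
    Jrate p d T hT.le μ a φ x ≤
      liminf (fun n => Jrate p d T hT.le μ a (φn n) (xn n)) atTop := by
  -- compact set K containing all relevant values
  set K : Set (Fin p → ℝ) := Metric.cthickening 1 (Set.range φ) with hKdef
  have hKcomp : IsCompact K := (isCompact_range φ.continuous).cthickening
  have hne : Nonempty (Set.Icc (0:ℝ) T) := ⟨⟨0, le_refl 0, hT.le⟩⟩
  have hKne : K.Nonempty := by
    obtain ⟨t⟩ := hne
    exact ⟨φ t, Metric.self_subset_cthickening _ ⟨t, rfl⟩⟩
  have hφK : ∀ t, φ t ∈ K := fun t => Metric.self_subset_cthickening _ ⟨t, rfl⟩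
  -- reduce to dense inequality
  refine le_of_forall_lt_imp_le_of_dense fun b hb => ?_
  -- choose ε and an intermediate level y
  obtain ⟨ε, hε0, hε1, y, hyJ, hby⟩ : ∃ ε : ℝ, 0 < ε ∧ ε < 1 ∧
      ∃ y : ℝ≥0∞, y < Jrate p d T hT.le μ a φ x ∧
        b + ENNReal.ofReal (ε*T/2) < ENNReal.ofReal (1-ε) * y := by
    rcases eq_or_ne (Jrate p d T hT.le μ a φ x) ⊤ with hJ | hJ
    · refine ⟨1/2, by norm_num, by norm_num, 2 * (b + ENNReal.ofReal ((1/2)*T/2) + 1), ?_, ?_⟩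
      · rw [hJ]
        have hbne : b ≠ ⊤ := hb.ne_top
        exact ENNReal.mul_lt_top (by norm_num)
          (by simp [ENNReal.add_lt_top, hbne, ENNReal.ofReal_lt_top, lt_top_iff_ne_top])
      · have h2 : ENNReal.ofReal (1 - 1/2) * (2 * (b + ENNReal.ofReal ((1/2)*T/2) + 1))
            = b + ENNReal.ofReal ((1/2)*T/2) + 1 := by
          rw [← mul_assoc]
          have : ENNReal.ofReal (1 - 1/2) * 2 = 1 := by
            norm_num
            rw [show ((1:ℝ)/2) = (2:ℝ)⁻¹ by norm_num, ENNReal.ofReal_inv_of_pos (by norm_num)]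
            norm_num
            exact ENNReal.inv_mul_cancel (by norm_num) (by norm_num)
          rw [this, one_mul]
        rw [h2]
        exact ENNReal.lt_add_right (by simp [ENNReal.add_lt_top, hb.ne_top,
          lt_top_iff_ne_top, ENNReal.ofReal_lt_top]) one_ne_zero
    · -- finite case
      set J := Jrate p d T hT.le μ a φ x with hJdef
      have hbne : b ≠ ⊤ := hb.ne_top
      set β := b.toReal with hβdef
      set j := J.toReal with hjdef
      have hβj : β < j := (ENNReal.toReal_lt_toReal hbne hJ).mpr hb
      have hβ0 : 0 ≤ β := ENNReal.toReal_nonneg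
      set m := (β + j)/2 with hmdef
      have hm0 : 0 ≤ m := by positivity
      have hβm : β < m := by rw [hmdef]; linarith
      have hmj : m < j := by rw [hmdef]; linarith
      set gp := m - β with hgpdef
      have hgp : 0 < gp := by rw [hgpdef]; linarith
      set ε := min (1/2) (gp / (T/2 + m + 1)) with hεdef
      have hε0 : 0 < ε := lt_min (by norm_num) (by positivity)
      have hε1 : ε < 1 := lt_of_le_of_lt (min_le_left _ _) (by norm_num)
      refine ⟨ε, hε0, hε1, ENNReal.ofReal m, ?_, ?_⟩
      · exact (ENNReal.ofReal_lt_iff_lt_toReal hm0 hJ).mpr hmj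
      · have harith : β + ε*T/2 < (1-ε)*m := by
          have hεle : ε ≤ gp / (T/2 + m + 1) := min_le_right _ _
          have hden : (0:ℝ) < T/2 + m + 1 := by positivity
          have : ε * (T/2 + m) < gp := by
            have h1 : ε * (T/2 + m + 1) ≤ gp := by
              rw [← div_mul_cancel₀ gp hden.ne']
              exact mul_le_mul_of_nonneg_right hεle hden.le
            nlinarith [hε0]
          rw [hgpdef] at this
          nlinarith
        have hb' : b = ENNReal.ofReal β := (ENNReal.ofReal_toReal hbne).symm
        rw [hb', ← ENNReal.ofReal_add hβ0 (by positivity),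
          ← ENNReal.ofReal_mul (by linarith : (0:ℝ) ≤ 1 - ε)]
        exact ENNReal.ofReal_lt_ofReal_iff_of_nonneg (by positivity) |>.mpr harith
  -- uniform estimate
  obtain ⟨δ, hδ, hest⟩ := unifEst μ hμ a ha hpd K hKcomp hKne hε0
  -- eventually φn is close to φ
  have hev1 : ∀ᶠ n in atTop, dist (φn n) φ < min δ 1 :=
    Metric.tendsto_nhds.mp hφ _ (lt_min hδ one_pos)
  -- eventually y < J(xn|φ) by lower semicontinuity
  have hev2 : ∀ᶠ n in atTop, y < Jrate p d T hT.le μ a φ (xn n) :=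
    hx.eventually (hlsc φ x y hyJ)
  refine le_liminf_of_le (by isBoundedDefault) ?_
  filter_upwards [hev1, hev2] with n h1 h2
  -- pointwise estimate for this n
  have hpt : ∀ t : ℝ, ∀ v : Fin d → ℝ,
      (1-ε) * dotProduct (v - μ (φ (Set.projIcc 0 T hT.le t)))
          (((a (φ (Set.projIcc 0 T hT.le t)))⁻¹).mulVec
            (v - μ (φ (Set.projIcc 0 T hT.le t)))) - ε
        ≤ dotProduct (v - μ (φn n (Set.projIcc 0 T hT.le t)))
          (((a (φn n (Set.projIcc 0 T hT.le t)))⁻¹).mulVec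
            (v - μ (φn n (Set.projIcc 0 T hT.le t)))) := by
    intro t v
    set s := Set.projIcc 0 T hT.le t
    have hyK : φ s ∈ K := hφK s
    have hdle : dist (φn n s) (φ s) ≤ dist (φn n) φ := ContinuousMap.dist_apply_le_dist s
    have hy'K : φn n s ∈ K := by
      refine Metric.mem_cthickening_of_dist_le (φn n s) (φ s) 1 _ ⟨s, rfl⟩ ?_
      exact hdle.trans (le_of_lt (lt_of_lt_of_le h1 (min_le_right _ _)))
    have hdist : dist (φn n s) (φ s) < δ :=
      lt_of_le_of_lt hdle (lt_of_lt_of_le h1 (min_le_left _ _))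
    exact hest (φ s) hyK (φn n s) hy'K hdist v
  have hcomp := core hT μ hμ a ha hpd φ (φn n) (xn n) hε0 hε1 hpt
  -- conclude b ≤ Jrate (φn n) (xn n)
  have hky : ENNReal.ofReal (1-ε) * y ≤ Jrate p d T hT.le μ a (φn n) (xn n)
      + ENNReal.ofReal (ε*T/2) :=
    le_trans (mul_le_mul_right h2.le _) hcomp
  have hblt : b + ENNReal.ofReal (ε*T/2)
      < Jrate p d T hT.le μ a (φn n) (xn n) + ENNReal.ofReal (ε*T/2) :=
    lt_of_lt_of_le hby hky
  have := (ENNReal.add_lt_add_iff_right (ENNReal.ofReal_ne_top)).mp hblt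
  exact this.le
end

section
/- Fix z ∈ ℝ^d, a continuous map t ↦ A(t) ∈ ℝ^{d×d} with A(t) symmetric positive definite, and b ∈ L²([0,T], ℝ^d). Then the infimum over u ∈ L²([0,T],ℝ^d) with ∫₀ᵀ u(t) dt = z of (1/2)∫₀ᵀ (u(t) − b(t))ᵀ A(t)^{-1} (u(t) − b(t)) dt equals (1/2)(z − B)ᵀ Ā^{-1} (z − B), where B = ∫₀ᵀ b(t) dt and Ā = ∫₀ᵀ A(t) dt. The minimizer is u(t) = b(t) − A(t)λ with λ = −Ā^{-1}(z − B). -/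
open MeasureTheory Set
open Matrix

lemma stmt18_symm_dot {d : ℕ} (M : Matrix (Fin d) (Fin d) ℝ) (hM : Mᵀ = M) (x y : Fin d → ℝ) :
    dotProduct x (M.mulVec y) = dotProduct (M.mulVec x) y := by
  rw [Matrix.dotProduct_mulVec,
    show x ᵥ* M = M *ᵥ x by conv_lhs => rw [← hM, Matrix.vecMul_transpose]]

lemma stmt18_key_ineq {d : ℕ} (M : Matrix (Fin d) (Fin d) ℝ) (hM : M.PosDef) (w v : Fin d → ℝ) :
    2 * dotProduct w v - dotProduct w (M.mulVec w) ≤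
      dotProduct v (M⁻¹.mulVec v) := by
  have hinv : M⁻¹.PosDef := hM.inv
  have hinvsym : M⁻¹ᵀ = M⁻¹ := by
    rw [← Matrix.conjTranspose_eq_transpose_of_trivial]; exact hinv.isHermitian
  have hw : M⁻¹ *ᵥ (M *ᵥ w) = w := by
    rw [Matrix.mulVec_mulVec, Matrix.nonsing_inv_mul M hM.det_pos.ne'.isUnit, Matrix.one_mulVec]
  have h0 : 0 ≤ dotProduct (v - M *ᵥ w) (M⁻¹ *ᵥ (v - M *ᵥ w)) := by
    simpa using hinv.posSemidef.dotProduct_mulVec_nonneg (v - M *ᵥ w)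
  rw [Matrix.mulVec_sub, hw, sub_dotProduct, dotProduct_sub,
    dotProduct_sub] at h0
  have e1 : dotProduct (M *ᵥ w) (M⁻¹ *ᵥ v) = dotProduct w v := by
    rw [stmt18_symm_dot _ hinvsym, hw]
  have e2 : dotProduct v w = dotProduct w v := dotProduct_comm _ _
  have e3 : dotProduct (M *ᵥ w) w = dotProduct w (M *ᵥ w) :=
    dotProduct_comm _ _
  rw [e1, e2, e3] at h0
  linarith

set_option maxHeartbeats 1000000 in
theorem stmt18 (d : ℕ) (T : ℝ) (hT : 0 < T)
    (A : ℝ → Matrix (Fin d) (Fin d) ℝ) (hA : Continuous A) (hpd : ∀ t, (A t).PosDef)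
    (b : ℝ → Fin d → ℝ)
    (hbi : ∀ i, IntervalIntegrable (fun t => b t i) volume 0 T)
    (hb2 : IntervalIntegrable (fun t => ∑ i, (b t i) ^ 2) volume 0 T)
    (z : Fin d → ℝ) :
    let Abar : Matrix (Fin d) (Fin d) ℝ := Matrix.of fun i j => ∫ t in (0:ℝ)..T, A t i j
    let B : Fin d → ℝ := fun i => ∫ t in (0:ℝ)..T, b t i
    let u₀ : ℝ → Fin d → ℝ := fun t => b t + (A t).mulVec (Abar⁻¹.mulVec (z - B))
    -- the minimizer u₀(t) = b(t) − A(t)λ with λ = −Ā⁻¹(z − B) satisfies the constraint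
    (∀ i, ∫ t in (0:ℝ)..T, u₀ t i = z i) ∧
    -- and attains the value (1/2)(z−B)ᵀĀ⁻¹(z−B)
    ((1/2) * ∫ t in (0:ℝ)..T,
        dotProduct (u₀ t - b t) (((A t)⁻¹).mulVec (u₀ t - b t)) =
      (1/2) * dotProduct (z - B) (Abar⁻¹.mulVec (z - B))) ∧
    -- and the infimum of the constrained problem equals that value
    sInf {r : ℝ | ∃ u : ℝ → Fin d → ℝ,
        (∀ i, IntervalIntegrable (fun t => u t i) volume 0 T) ∧
        IntervalIntegrable (fun t =>
          dotProduct (u t - b t) (((A t)⁻¹).mulVec (u t - b t))) volume 0 T ∧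
        (∀ i, ∫ t in (0:ℝ)..T, u t i = z i) ∧
        r = (1/2) * ∫ t in (0:ℝ)..T,
          dotProduct (u t - b t) (((A t)⁻¹).mulVec (u t - b t))}
      = (1/2) * dotProduct (z - B) (Abar⁻¹.mulVec (z - B)) := by
  intro Abar B u₀
  set w : Fin d → ℝ := Abar⁻¹.mulVec (z - B) with hwdef
  have hu₀ : ∀ t, u₀ t = b t + (A t).mulVec w := fun t => rfl
  have hAbarE : ∀ i j, Abar i j = ∫ t in (0:ℝ)..T, A t i j := fun i j => rfl
  have hBE : ∀ i, B i = ∫ t in (0:ℝ)..T, b t i := fun i => rfl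
  have hAc : ∀ i j, Continuous fun t => A t i j := fun i j => hA.matrix_elem i j
  have hmv : ∀ (c : Fin d → ℝ) i, Continuous fun t => (A t).mulVec c i := by
    intro c i
    simp only [Matrix.mulVec, dotProduct]
    exact continuous_finset_sum _ fun j _ => (hAc i j).mul continuous_const
  have hImv : ∀ (c : Fin d → ℝ) i, (∫ t in (0:ℝ)..T, (A t).mulVec c i) = Abar.mulVec c i := by
    intro c i
    simp only [Matrix.mulVec, dotProduct]
    rw [intervalIntegral.integral_finset_sum (f := fun j t => A t i j * c j) fun j _ =>
      ((hAc i j).mul continuous_const).intervalIntegrable _ _]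
    simp only [intervalIntegral.integral_mul_const]
    rfl
  have hQc : ∀ (c : Fin d → ℝ), Continuous fun t => dotProduct c ((A t).mulVec c) := by
    intro c
    simp only [dotProduct]
    exact continuous_finset_sum _ fun i _ => continuous_const.mul (hmv c i)
  have hQ : ∀ (c : Fin d → ℝ), (∫ t in (0:ℝ)..T, dotProduct c ((A t).mulVec c)) =
      dotProduct c (Abar.mulVec c) := by
    intro c
    simp only [dotProduct]
    rw [intervalIntegral.integral_finset_sum (f := fun i t => c i * (A t).mulVec c i) fun i _ =>
      (continuous_const.mul (hmv c i)).intervalIntegrable _ _]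
    simp only [intervalIntegral.integral_const_mul, hImv]
  have hsym : ∀ t i j, A t i j = A t j i := by
    intro t i j
    conv_lhs => rw [← (hpd t).isHermitian]
    simp [Matrix.conjTranspose_apply]
  have hAbarHerm : Abar.IsHermitian := by
    show Abarᴴ = Abar
    ext i j
    simp only [Matrix.conjTranspose_apply, star_trivial, hAbarE]
    exact intervalIntegral.integral_congr fun t _ => hsym t j i
  have hAbarPD : Abar.PosDef := by
    refine Matrix.PosDef.of_dotProduct_mulVec_pos hAbarHerm fun x hx => ?_
    have h1 : dotProduct (star x) (Abar.mulVec x) =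
        dotProduct x (Abar.mulVec x) := by simp
    rw [h1, ← hQ x]
    refine intervalIntegral.intervalIntegral_pos_of_pos ((hQc x).intervalIntegrable _ _) (fun t => ?_) hT
    simpa using (hpd t).dotProduct_mulVec_pos hx
  have hdet : IsUnit Abar.det := hAbarPD.det_pos.ne'.isUnit
  have hAbarw : Abar.mulVec w = z - B := by
    rw [hwdef, Matrix.mulVec_mulVec, Matrix.mul_nonsing_inv _ hdet, Matrix.one_mulVec]
  -- constraint
  have hconstr0 : ∀ i, ∫ t in (0:ℝ)..T, u₀ t i = z i := by
    intro i
    have : (fun t => u₀ t i) = fun t => b t i + (A t).mulVec w i := by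
      funext t; rw [hu₀]; rfl
    rw [this, intervalIntegral.integral_add (hbi i) ((hmv w i).intervalIntegrable _ _), hImv,
      ← hBE i, congrFun hAbarw i]
    simp
  -- value of u₀
  have hfun : ∀ t, dotProduct (u₀ t - b t) (((A t)⁻¹).mulVec (u₀ t - b t)) =
      dotProduct w ((A t).mulVec w) := by
    intro t
    have h1 : u₀ t - b t = (A t).mulVec w := by rw [hu₀]; exact add_sub_cancel_left _ _
    have h2 : ((A t)⁻¹).mulVec ((A t).mulVec w) = w := by
      rw [Matrix.mulVec_mulVec, Matrix.nonsing_inv_mul _ (hpd t).det_pos.ne'.isUnit,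
        Matrix.one_mulVec]
    rw [h1, h2, dotProduct_comm]
  have hval : (∫ t in (0:ℝ)..T,
      dotProduct (u₀ t - b t) (((A t)⁻¹).mulVec (u₀ t - b t))) =
      dotProduct (z - B) w := by
    rw [intervalIntegral.integral_congr fun t _ => hfun t, hQ w, hAbarw,
      dotProduct_comm]
  refine ⟨hconstr0, by rw [hval], ?_⟩
  -- the infimum
  have hmem : ((1/2) * dotProduct (z - B) w) ∈
      {r : ℝ | ∃ u : ℝ → Fin d → ℝ,
        (∀ i, IntervalIntegrable (fun t => u t i) volume 0 T) ∧
        IntervalIntegrable (fun t =>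
          dotProduct (u t - b t) (((A t)⁻¹).mulVec (u t - b t))) volume 0 T ∧
        (∀ i, ∫ t in (0:ℝ)..T, u t i = z i) ∧
        r = (1/2) * ∫ t in (0:ℝ)..T,
          dotProduct (u t - b t) (((A t)⁻¹).mulVec (u t - b t))} := by
    refine ⟨u₀, fun i => ?_, ?_, hconstr0, by rw [hval]⟩
    · have : (fun t => u₀ t i) = fun t => b t i + (A t).mulVec w i := by
        funext t; rw [hu₀]; rfl
      rw [this]
      exact (hbi i).add ((hmv w i).intervalIntegrable _ _)
    · have : (fun t => dotProduct (u₀ t - b t) (((A t)⁻¹).mulVec (u₀ t - b t))) =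
          fun t => dotProduct w ((A t).mulVec w) := funext hfun
      rw [this]
      exact (hQc w).intervalIntegrable _ _
  have hlb : ∀ r ∈ {r : ℝ | ∃ u : ℝ → Fin d → ℝ,
        (∀ i, IntervalIntegrable (fun t => u t i) volume 0 T) ∧
        IntervalIntegrable (fun t =>
          dotProduct (u t - b t) (((A t)⁻¹).mulVec (u t - b t))) volume 0 T ∧
        (∀ i, ∫ t in (0:ℝ)..T, u t i = z i) ∧
        r = (1/2) * ∫ t in (0:ℝ)..T,
          dotProduct (u t - b t) (((A t)⁻¹).mulVec (u t - b t))},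
      (1/2) * dotProduct (z - B) w ≤ r := by
    rintro r ⟨u, hui, huQ, hcon, rfl⟩
    have hvi : ∀ i, IntervalIntegrable (fun t => u t i - b t i) volume 0 T :=
      fun i => (hui i).sub (hbi i)
    have hgdot : IntervalIntegrable (fun t => dotProduct w (u t - b t)) volume 0 T := by
      have h : (fun t => dotProduct w (u t - b t)) =
          ∑ i : Fin d, (fun t => w i * (u t i - b t i)) := by
        funext t; simp [dotProduct, Finset.sum_apply]
      rw [h]
      exact IntervalIntegrable.sum _ fun i _ => (hvi i).const_mul _
    have hIdot : (∫ t in (0:ℝ)..T, dotProduct w (u t - b t)) =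
        dotProduct w (z - B) := by
      have : (fun t => dotProduct w (u t - b t)) =
          fun t => ∑ i, w i * (u t i - b t i) := by
        funext t; simp [dotProduct]
      rw [this, intervalIntegral.integral_finset_sum fun i _ => (hvi i).const_mul _]
      have : ∀ i, (∫ t in (0:ℝ)..T, w i * (u t i - b t i)) = w i * (z i - B i) := by
        intro i
        rw [intervalIntegral.integral_const_mul, intervalIntegral.integral_sub (hui i) (hbi i),
          hcon i, ← hBE i]
      simp only [this]
      simp [dotProduct]
    set g : ℝ → ℝ := fun t =>
      2 * dotProduct w (u t - b t) - dotProduct w ((A t).mulVec w) with hgdef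
    have hgint : IntervalIntegrable g volume 0 T :=
      ((hgdot.const_mul 2).sub ((hQc w).intervalIntegrable _ _))
    have hle : (∫ t in (0:ℝ)..T, g t) ≤ ∫ t in (0:ℝ)..T,
        dotProduct (u t - b t) (((A t)⁻¹).mulVec (u t - b t)) :=
      intervalIntegral.integral_mono_on hT.le hgint huQ
        (fun t _ => stmt18_key_ineq (A t) (hpd t) w (u t - b t))
    have hgI : (∫ t in (0:ℝ)..T, g t) = dotProduct (z - B) w := by
      rw [hgdef]
      rw [intervalIntegral.integral_sub (hgdot.const_mul 2) ((hQc w).intervalIntegrable _ _)]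
      rw [intervalIntegral.integral_const_mul, hIdot, hQ w, hAbarw]
      rw [dotProduct_comm (z - B) w]
      ring
    linarith [hle, hgI.le, hgI.ge]
  exact le_antisymm (csInf_le ⟨_, hlb⟩ hmem) (le_csInf ⟨_, hmem⟩ hlb)
end
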